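/- Let M₀ = Z_p/p ≅ F_p regarded as an R-module on which both F and V act as zero. Then M₀ ⊠ M₀ is isomorphic as an R-module to R/(p, V) ≅ F_p[F]; in particular M₀ ⊠ M₀ is infinite-dimensional as an F_p-vector space, with basis the classes of F^l ⊗ (1̄ ⊗ 1̄) for l ≥ 0. (This is the Dieudonné-module form of the statement that for H = k[x]/x^p with x primitive, H ⊠ H ≅ k[x] with x primitive.) -/

import Mathlib

set_option synthInstance.maxHeartbeats 1000000
set_option maxHeartbeats 1000000

/-! Statement 14: for `M₀ = ℤ_p/p ≅ F_p` with `F = V = 0`, the bilinear product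
`M₀ ⊠ M₀` is isomorphic as an `R`-module to `R/(p,V) ≅ F_p[F]`; in particular it is an
infinite-dimensional `F_p`-vector space with basis the classes of `F^l ⊗ (1̄ ⊗ 1̄)`,
`l ≥ 0`. -/

noncomputable section

/-- A Dieudonné-bilinear map between `ℤ_p`-modules equipped with operators `F`, `V`
(diagonal `V`, and `F` hooked across `V`), as in the definition of the bilinear
product of Dieudonné modules. -/
def IsDBilinear {p : ℕ} [Fact p.Prime] {M N P : Type}
    [AddCommGroup M] [Module ℤ_[p] M] [AddCommGroup N] [Module ℤ_[p] N]
    [AddCommGroup P] [Module ℤ_[p] P]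
    (FM VM : Module.End ℤ_[p] M) (FN VN : Module.End ℤ_[p] N)
    (FP VP : Module.End ℤ_[p] P) (β : M →ₗ[ℤ_[p]] N →ₗ[ℤ_[p]] P) : Prop :=
  (∀ m n, FP (β (VM m) n) = β m (FN n)) ∧
  (∀ m n, FP (β m (VN n)) = β (FM m) n) ∧
  (∀ m n, VP (β m n) = β (VM m) (VN n))

/-- `(P, β)` realizes the bilinear product `M ⊠ N` of Dieudonné modules: `β` is a
Dieudonné-bilinear map, `P` is itself a Dieudonné module, and `β` is universal among
Dieudonné-bilinear maps out of `M × N`: every such map to a Dieudonné module `Q`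
factors uniquely through an `R`-module map (a `ℤ_p`-linear map commuting with `F`
and `V`) out of `P`.  This is exactly the defining universal property of `M ⊠ N`,
which the explicit construction `R ⊗_{ℤ_p[V]} (M ⊗ N)/∼` satisfies. -/
def IsBoxtimes (p : ℕ) [Fact p.Prime] {M N P : Type}
    [AddCommGroup M] [Module ℤ_[p] M] [AddCommGroup N] [Module ℤ_[p] N]
    [AddCommGroup P] [Module ℤ_[p] P]
    (FM VM : Module.End ℤ_[p] M) (FN VN : Module.End ℤ_[p] N)
    (FP VP : Module.End ℤ_[p] P) (β : M →ₗ[ℤ_[p]] N →ₗ[ℤ_[p]] P) : Prop :=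
  IsDBilinear FM VM FN VN FP VP β ∧
  FP * VP = (p : ℤ_[p]) • (1 : Module.End ℤ_[p] P) ∧
  VP * FP = (p : ℤ_[p]) • (1 : Module.End ℤ_[p] P) ∧
  ∀ (Q : Type) [AddCommGroup Q] [Module ℤ_[p] Q],
    ∀ FQ VQ : Module.End ℤ_[p] Q,
    FQ * VQ = (p : ℤ_[p]) • (1 : Module.End ℤ_[p] Q) →
    VQ * FQ = (p : ℤ_[p]) • (1 : Module.End ℤ_[p] Q) →
    ∀ γ : M →ₗ[ℤ_[p]] N →ₗ[ℤ_[p]] Q, IsDBilinear FM VM FN VN FQ VQ γ →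
    ∃! φ : P →ₗ[ℤ_[p]] Q,
      φ ∘ₗ (FP : P →ₗ[ℤ_[p]] P) = (FQ : Q →ₗ[ℤ_[p]] Q) ∘ₗ φ ∧
      φ ∘ₗ (VP : P →ₗ[ℤ_[p]] P) = (VQ : Q →ₗ[ℤ_[p]] Q) ∘ₗ φ ∧
      ∀ m n, φ (β m n) = γ m n

/-- The defining ideal `(FV - p)` of the Dieudonné ring, inside `ℤ_p[V][F]`
(the outer polynomial variable is `F`, the inner one is `V`). -/
def DIdeal (p : ℕ) [Fact p.Prime] : Ideal (Polynomial (Polynomial ℤ_[p])) :=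
  Ideal.span {Polynomial.X * Polynomial.C Polynomial.X -
    Polynomial.C (Polynomial.C (p : ℤ_[p]))}

/-- The Dieudonné ring `R = ℤ_p[F,V]/(FV - p)` over the prime field `F_p`. -/
abbrev DRing (p : ℕ) [Fact p.Prime] : Type :=
  Polynomial (Polynomial ℤ_[p]) ⧸ DIdeal p

instance DRing.isTwoSided (p : ℕ) [Fact p.Prime] (I : Ideal (DRing p)) : I.IsTwoSided :=
  ⟨fun b ha ↦ mul_comm b _ ▸ I.smul_mem _ ha⟩

/-- The element `F` of the Dieudonné ring. -/
def DRing.FF (p : ℕ) [Fact p.Prime] : DRing p :=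
  Ideal.Quotient.mk (DIdeal p) Polynomial.X

/-- The element `V` of the Dieudonné ring. -/
def DRing.VV (p : ℕ) [Fact p.Prime] : DRing p :=
  Ideal.Quotient.mk (DIdeal p) (Polynomial.C Polynomial.X)

/-- `M₀ = ℤ_p/p ≅ F_p`. -/
abbrev Mzero (p : ℕ) [Fact p.Prime] : Type :=
  ℤ_[p] ⧸ (Ideal.span {(p : ℤ_[p])} : Ideal ℤ_[p])

/-- The class `1̄ ∈ M₀`. -/
def MzeroOne (p : ℕ) [Fact p.Prime] : Mzero p :=
  Ideal.Quotient.mk (Ideal.span {(p : ℤ_[p])}) 1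

namespace S14
open Polynomial

variable (p : ℕ) [Fact p.Prime]

abbrev A : Type := Polynomial (Polynomial ℤ_[p])
abbrev J : Ideal (DRing p) := Ideal.span {(p : DRing p), DRing.VV p}
abbrev Q : Type := DRing p ⧸ J p

noncomputable def mk1 : A p →ₐ[ℤ_[p]] DRing p := Ideal.Quotient.mkₐ ℤ_[p] (DIdeal p)
noncomputable def mk2 : DRing p →ₐ[ℤ_[p]] Q p := Ideal.Quotient.mkₐ ℤ_[p] (J p)

lemma mk1_X : mk1 p Polynomial.X = DRing.FF p := rfl
lemma mk1_CX : mk1 p (Polynomial.C Polynomial.X) = DRing.VV p := rfl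

lemma mk1_CC (c : ℤ_[p]) : mk1 p (Polynomial.C (Polynomial.C c)) = (algebraMap ℤ_[p] (DRing p) : ℤ_[p] →+* DRing p) c := by
  have : Polynomial.C (Polynomial.C c) = algebraMap ℤ_[p] (A p) c := by
    simp [Polynomial.algebraMap_apply]
  rw [this, AlgHom.commutes]

lemma rel : DRing.FF p * DRing.VV p = (p : DRing p) := by
  have h : Ideal.Quotient.mk (DIdeal p)
      (Polynomial.X * Polynomial.C Polynomial.X - Polynomial.C (Polynomial.C (p : ℤ_[p]))) = 0 := by
    rw [Ideal.Quotient.eq_zero_iff_mem]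
    exact Ideal.subset_span (Set.mem_singleton _)
  rw [map_sub, map_mul, sub_eq_zero] at h
  have hC : (Polynomial.C (Polynomial.C ((p : ℕ) : ℤ_[p])) : A p) = ((p : ℕ) : A p) :=
    map_natCast (Polynomial.C.comp Polynomial.C : ℤ_[p] →+* A p) p
  rw [hC, map_natCast] at h
  exact h

lemma mk2_p : mk2 p ((p : ℕ) : DRing p) = 0 := by
  rw [mk2, Ideal.Quotient.mkₐ_eq_mk, Ideal.Quotient.eq_zero_iff_mem]
  exact Ideal.subset_span (Set.mem_insert _ _)

lemma mk2_VV : mk2 p (DRing.VV p) = 0 := by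
  rw [mk2, Ideal.Quotient.mkₐ_eq_mk, Ideal.Quotient.eq_zero_iff_mem]
  exact Ideal.subset_span (Set.mem_insert_of_mem _ rfl)

lemma smul_mk2 (r s : DRing p) : r • mk2 p s = mk2 p (r * s) := rfl

lemma mul_smul_Q (r s : DRing p) (y : Q p) : (r * s) • y = r • s • y := by
  obtain ⟨t, rfl⟩ := Ideal.Quotient.mk_surjective (I := J p) y
  show (r * s) • mk2 p t = r • (s • mk2 p t)
  rw [smul_mk2, smul_mk2, smul_mk2]
  exact congrArg _ (mul_assoc r s t)

lemma zsmul_mk2 (a : ℤ_[p]) (r : DRing p) :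
    a • mk2 p r = mk2 p ((algebraMap ℤ_[p] (DRing p) : ℤ_[p] →+* DRing p) a * r) := by
  have h := algebraMap_smul (DRing p) a (mk2 p r)
  rw [← h]
  exact smul_mk2 p _ r

lemma VV_smul_Q (y : Q p) : DRing.VV p • y = 0 := by
  obtain ⟨r, rfl⟩ := Ideal.Quotient.mk_surjective (I := J p) y
  have : (Ideal.Quotient.mk (J p)) r = mk2 p r := rfl
  rw [this, smul_mk2, ← mk2_VV]
  exact (map_mul (mk2 p) _ _).trans (by rw [mk2_VV]; exact zero_mul _)

lemma natp_smul_Q (y : Q p) : ((p : ℕ) : DRing p) • y = 0 := by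
  obtain ⟨r, rfl⟩ := Ideal.Quotient.mk_surjective (I := J p) y
  have : (Ideal.Quotient.mk (J p)) r = mk2 p r := rfl
  rw [this, smul_mk2]
  exact (map_mul (mk2 p) _ _).trans (by rw [mk2_p]; exact zero_mul _)

lemma p_smul_Q (y : Q p) : ((p : ℕ) : ℤ_[p]) • y = 0 := by
  have h := algebraMap_smul (DRing p) ((p:ℕ) : ℤ_[p]) y
  rw [map_natCast] at h
  rw [← h]
  exact natp_smul_Q p y

noncomputable def ρ : Mzero p →ₐ[ℤ_[p]] Q p :=
  Ideal.Quotient.liftₐ (Ideal.span {((p : ℕ) : ℤ_[p])}) (Algebra.ofId ℤ_[p] (Q p)) (by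
    intro a ha
    rw [Ideal.mem_span_singleton] at ha
    obtain ⟨c, rfl⟩ := ha
    have hpQ : ((p:ℕ) : Q p) = 0 := by
      rw [← map_natCast (mk2 p) p]; exact mk2_p p
    have h1 : Algebra.ofId ℤ_[p] (Q p) ((p:ℕ) : ℤ_[p]) = ((p:ℕ) : Q p) := map_natCast _ p
    rw [map_mul, h1, hpQ, zero_mul])

noncomputable def γ : Mzero p →ₗ[ℤ_[p]] Mzero p →ₗ[ℤ_[p]] Q p :=
  (LinearMap.mul ℤ_[p] (Mzero p)).compr₂ (ρ p).toLinearMap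

lemma γ_apply (m n : Mzero p) : γ p m n = ρ p (m * n) := rfl

noncomputable def FQ : Module.End ℤ_[p] (Q p) :=
  (Algebra.lsmul ℤ_[p] ℤ_[p] (Q p) : DRing p →ₐ[ℤ_[p]] Module.End ℤ_[p] (Q p)) (DRing.FF p)
noncomputable def VQ : Module.End ℤ_[p] (Q p) :=
  (Algebra.lsmul ℤ_[p] ℤ_[p] (Q p) : DRing p →ₐ[ℤ_[p]] Module.End ℤ_[p] (Q p)) (DRing.VV p)

lemma FQ_apply (y : Q p) : FQ p y = DRing.FF p • y := rfl
lemma VQ_apply (y : Q p) : VQ p y = DRing.VV p • y := rfl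

lemma FQVQ : FQ p * VQ p = ((p:ℕ) : ℤ_[p]) • (1 : Module.End ℤ_[p] (Q p)) := by
  apply LinearMap.ext
  intro y
  obtain ⟨r, rfl⟩ := Ideal.Quotient.mk_surjective (I := J p) y
  show DRing.FF p • (DRing.VV p • mk2 p r) = ((p:ℕ) : ℤ_[p]) • mk2 p r
  rw [smul_mk2, smul_mk2,
    show DRing.FF p * (DRing.VV p * r) = ((p:ℕ) : DRing p) * r from
      (mul_assoc (DRing.FF p) (DRing.VV p) r).symm.trans (congrArg (· * r) (rel p)),
    p_smul_Q, map_mul, mk2_p, zero_mul]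

lemma VQFQ : VQ p * FQ p = ((p:ℕ) : ℤ_[p]) • (1 : Module.End ℤ_[p] (Q p)) := by
  apply LinearMap.ext
  intro y
  obtain ⟨r, rfl⟩ := Ideal.Quotient.mk_surjective (I := J p) y
  show DRing.VV p • (DRing.FF p • mk2 p r) = ((p:ℕ) : ℤ_[p]) • mk2 p r
  rw [smul_mk2, smul_mk2,
    show DRing.VV p * (DRing.FF p * r) = ((p:ℕ) : DRing p) * r from
      (mul_assoc (DRing.VV p) (DRing.FF p) r).symm.trans
        (congrArg (· * r) ((mul_comm (DRing.VV p) (DRing.FF p)).trans (rel p))),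
    p_smul_Q, map_mul, mk2_p, zero_mul]

lemma γ_bilinear : IsDBilinear (0 : Module.End ℤ_[p] (Mzero p)) (0 : Module.End ℤ_[p] (Mzero p))
    (0 : Module.End ℤ_[p] (Mzero p)) (0 : Module.End ℤ_[p] (Mzero p)) (FQ p) (VQ p) (γ p) := by
  refine ⟨fun m n => ?_, fun m n => ?_, fun m n => ?_⟩
  · simp
  · simp
  · simp [VQ_apply, VV_smul_Q]

lemma MzeroOne_eq_one : MzeroOne p = 1 := rfl

lemma ρ_mk (x : ℤ_[p]) :
    ρ p (Ideal.Quotient.mk (Ideal.span {((p:ℕ) : ℤ_[p])}) x) = algebraMap ℤ_[p] (Q p) x := rfl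

lemma smul_MzeroOne (a : ℤ_[p]) :
    a • MzeroOne p = Ideal.Quotient.mk (Ideal.span {((p:ℕ) : ℤ_[p])}) a := by
  have : a • MzeroOne p = Ideal.Quotient.mk (Ideal.span {((p:ℕ) : ℤ_[p])}) (a * 1) := rfl
  rw [this, mul_one]

lemma p_smul_MzeroOne : ((p:ℕ) : ℤ_[p]) • MzeroOne p = 0 := by
  rw [smul_MzeroOne, Ideal.Quotient.eq_zero_iff_mem]
  exact Ideal.subset_span (Set.mem_singleton _)

lemma beta_zero_left {W : Type} [AddCommGroup W] [Module ℤ_[p] W]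
    (β : Mzero p →ₗ[ℤ_[p]] Mzero p →ₗ[ℤ_[p]] W) (y : Mzero p) :
    β ((0 : Module.End ℤ_[p] (Mzero p)) y) = 0 := by
  have z0 : (0 : Module.End ℤ_[p] (Mzero p)) y = (0 : Mzero p) := LinearMap.zero_apply y
  rw [z0]
  exact β.map_zero

lemma beta_p_smul {W : Type} [AddCommGroup W] [Module ℤ_[p] W]
    (β : Mzero p →ₗ[ℤ_[p]] Mzero p →ₗ[ℤ_[p]] W) :
    ((p : ℕ) : ℤ_[p]) • (β (MzeroOne p)) (MzeroOne p) = 0 := by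
  have h2 : ((p : ℕ) : ℤ_[p]) • (β (MzeroOne p)) (MzeroOne p)
      = (β (((p : ℕ) : ℤ_[p]) • MzeroOne p)) (MzeroOne p) := by
    rw [β.map_smul ((p : ℕ) : ℤ_[p]) (MzeroOne p), LinearMap.smul_apply]
  rw [h2, p_smul_MzeroOne, β.map_zero, LinearMap.zero_apply]

lemma beta_mk_mk {W : Type} [AddCommGroup W] [Module ℤ_[p] W]
    (β : Mzero p →ₗ[ℤ_[p]] Mzero p →ₗ[ℤ_[p]] W) (a b : ℤ_[p]) :
    (β (Ideal.Quotient.mk (Ideal.span {((p : ℕ) : ℤ_[p])}) a))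
      (Ideal.Quotient.mk (Ideal.span {((p : ℕ) : ℤ_[p])}) b)
    = (a * b) • (β (MzeroOne p)) (MzeroOne p) := by
  rw [← smul_MzeroOne p a, ← smul_MzeroOne p b, β.map_smul a (MzeroOne p),
    LinearMap.smul_apply, (β (MzeroOne p)).map_smul b (MzeroOne p)]
  exact smul_smul a b _

-- the ring hom to F_p[X]
noncomputable def f0 : Polynomial ℤ_[p] →+* ZMod p :=
  (PadicInt.toZMod).comp (Polynomial.evalRingHom 0)

noncomputable def θ : A p →+* Polynomial (ZMod p) := Polynomial.mapRingHom (f0 p)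

lemma f0_X : f0 p Polynomial.X = 0 := by simp [f0]
lemma f0_C (c : ℤ_[p]) : f0 p (Polynomial.C c) = PadicInt.toZMod c := by simp [f0]

lemma θ_DIdeal : DIdeal p ≤ RingHom.ker (θ p) := by
  rw [DIdeal, Ideal.span_le, Set.singleton_subset_iff]
  have : θ p (Polynomial.X * Polynomial.C Polynomial.X - Polynomial.C (Polynomial.C ((p:ℕ) : ℤ_[p]))) = 0 := by
    simp [θ, f0_X, f0_C, ZMod.natCast_self]
  simpa [RingHom.mem_ker] using this

noncomputable def Θ : DRing p →+* Polynomial (ZMod p) :=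
  Ideal.Quotient.lift (DIdeal p) (θ p) (fun a ha => θ_DIdeal p ha)

lemma Θ_mk1 (a : A p) : Θ p (mk1 p a) = θ p a := rfl

lemma Θ_J : J p ≤ RingHom.ker (Θ p) := by
  rw [Ideal.span_le]
  rintro s (rfl | rfl)
  · rw [SetLike.mem_coe, RingHom.mem_ker]
    exact (map_natCast (Θ p) p).trans (CharP.cast_eq_zero _ p)
  · rw [SetLike.mem_coe, RingHom.mem_ker]
    have : Θ p (DRing.VV p) = θ p (Polynomial.C Polynomial.X) := rfl
    rw [this, θ, Polynomial.coe_mapRingHom, Polynomial.map_C, f0_X, map_zero]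

end S14

set_option maxHeartbeats 10000000 in
set_option synthInstance.maxHeartbeats 10000000 in
theorem statement14 (p : ℕ) [Fact p.Prime] (hp : Odd p)
    {P : Type} [AddCommGroup P] [Module ℤ_[p] P]
    (FP VP : Module.End ℤ_[p] P)
    (β : Mzero p →ₗ[ℤ_[p]] Mzero p →ₗ[ℤ_[p]] P)
    -- `(P, β)` is the bilinear product `M₀ ⊠ M₀`, where `F` and `V` act as zero on `M₀`
    (hbox : IsBoxtimes p (0 : Module.End ℤ_[p] (Mzero p)) (0 : Module.End ℤ_[p] (Mzero p))
      (0 : Module.End ℤ_[p] (Mzero p)) (0 : Module.End ℤ_[p] (Mzero p)) FP VP β)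
    -- the (unique) `R`-module structure on `P` extending its Dieudonné structure
    [Module (DRing p) P] [IsScalarTower ℤ_[p] (DRing p) P]
    (hFs : ∀ x : P, DRing.FF p • x = FP x) (hVs : ∀ x : P, DRing.VV p • x = VP x) :
    -- `M₀ ⊠ M₀ ≅ R/(p, V)` as `R`-modules, via `1 ↦ 1̄ ∘ 1̄`
    (∃ e : (DRing p ⧸ (Ideal.span {(p : DRing p), DRing.VV p} : Ideal (DRing p)))
        ≃ₗ[DRing p] P,
      e (Ideal.Quotient.mk (Ideal.span {(p : DRing p), DRing.VV p}) 1) =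
        β (MzeroOne p) (MzeroOne p)) ∧
    -- in particular `M₀ ⊠ M₀` is an `F_p`-vector space (`p` acts as zero) ...
    (∀ x : P, (p : ℤ_[p]) • x = 0) ∧
    -- ... of infinite dimension, with basis the elements `F^l (1̄ ∘ 1̄)`, `l ≥ 0`:
    -- they span over `F_p` ...
    (∀ x : P, ∃ c : ℕ →₀ ℤ_[p],
      x = c.sum fun l a => a • (FP ^ l) (β (MzeroOne p) (MzeroOne p))) ∧
    -- ... and are linearly independent over `F_p`
    (∀ c : ℕ →₀ ℤ_[p],
      (c.sum fun l a => a • (FP ^ l) (β (MzeroOne p) (MzeroOne p))) = 0 →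
      ∀ l, (p : ℤ_[p]) ∣ c l) := by
  classical
  obtain ⟨⟨hb1, hb2, hb3⟩, hFV, hVF, huniv⟩ := hbox
  set v : P := β (MzeroOne p) (MzeroOne p) with hv
  have hVv : VP v = 0 := by
    rw [hv, hb3, S14.beta_zero_left p β (MzeroOne p)]
    rfl
  have hpv : ((p : ℕ) : ℤ_[p]) • v = 0 := by
    rw [hv]
    exact S14.beta_p_smul p β

  -- the universal map φ : P → Q
  obtain ⟨φ, ⟨hφF, hφV, hφβ⟩, hφuniq⟩ :=
    huniv (S14.Q p) (S14.FQ p) (S14.VQ p) (S14.FQVQ p) (S14.VQFQ p) (S14.γ p) (S14.γ_bilinear p)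
  -- the map ψ : Q → P
  have hJker : S14.J p ≤ LinearMap.ker (LinearMap.toSpanSingleton (DRing p) P v) := by
    apply Submodule.span_le.mpr
    rintro s (rfl | rfl)
    · rw [SetLike.mem_coe, LinearMap.mem_ker, LinearMap.toSpanSingleton_apply]
      calc ((p : ℕ) : DRing p) • v
          = (algebraMap ℤ_[p] (DRing p) : ℤ_[p] →+* DRing p) ((p : ℕ) : ℤ_[p]) • v := by rw [map_natCast]
        _ = ((p : ℕ) : ℤ_[p]) • v := algebraMap_smul _ _ _
        _ = 0 := hpv
    · rw [SetLike.mem_coe, LinearMap.mem_ker, LinearMap.toSpanSingleton_apply, hVs, hVv]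
  set ψ : S14.Q p →ₗ[DRing p] P :=
    Submodule.liftQ (S14.J p) (LinearMap.toSpanSingleton (DRing p) P v) hJker with hψdef
  have hψmk : ∀ r : DRing p, ψ (S14.mk2 p r) = r • v := fun r => rfl
  have hψsmulz : ∀ (a : ℤ_[p]) (q : S14.Q p), ψ (a • q) = a • ψ q := by
    intro a q
    obtain ⟨r, rfl⟩ := Ideal.Quotient.mk_surjective (I := S14.J p) q
    rw [show Ideal.Quotient.mk (S14.J p) r = S14.mk2 p r from rfl, S14.zsmul_mk2, hψmk, hψmk]
    exact (mul_smul ((algebraMap ℤ_[p] (DRing p) : ℤ_[p] →+* DRing p) a) r v).trans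
      (algebraMap_smul (DRing p) a (r • v))
  have hφF' : ∀ x : P, φ (FP x) = DRing.FF p • φ x := by
    intro x
    have h := LinearMap.congr_fun hφF x
    simpa [S14.FQ_apply] using h
  have hφV' : ∀ x : P, φ (VP x) = DRing.VV p • φ x := by
    intro x
    have h := LinearMap.congr_fun hφV x
    simpa [S14.VQ_apply] using h
  have hφv : φ v = 1 := by
    rw [hv, hφβ, S14.γ_apply, S14.MzeroOne_eq_one, mul_one, map_one]
  have hFpow : ∀ (n : ℕ) (x : P), (DRing.FF p) ^ n • x = (FP ^ n) x := by
    intro n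
    induction n with
    | zero => intro x; simp
    | succ n ih =>
      intro x
      have h1 : (DRing.FF p) ^ (n + 1) = (DRing.FF p) ^ n * DRing.FF p := pow_succ _ _
      have h2 : (FP ^ (n + 1) : Module.End ℤ_[p] P) = FP ^ n * FP := pow_succ _ _
      rw [h1, h2]
      refine (mul_smul ((DRing.FF p) ^ n) (DRing.FF p) x).trans ?_
      rw [hFs]
      exact ih (FP x)
  have hφpown : ∀ n : ℕ, φ ((FP ^ n) v) = S14.mk2 p ((DRing.FF p) ^ n) := by
    intro n
    induction n with
    | zero => simpa using hφv.trans (map_one (S14.mk2 p)).symm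
    | succ n ih =>
      have h2 : (FP ^ (n + 1) : Module.End ℤ_[p] P) = FP * FP ^ n := pow_succ' _ _
      rw [h2, Module.End.mul_apply, hφF', ih, S14.smul_mk2]
      exact congrArg _ (pow_succ' _ _).symm
  have hA1 : ∀ (n : ℕ) (c : ℤ_[p]), S14.mk1 p (Polynomial.C (Polynomial.C c) * Polynomial.X ^ n)
      = (algebraMap ℤ_[p] (DRing p) : ℤ_[p] →+* DRing p) c * (DRing.FF p) ^ n := by
    intro n c
    rw [map_mul, map_pow, S14.mk1_CC, S14.mk1_X]
  have hkey : ∀ (n : ℕ) (c : ℤ_[p]), S14.mk2 p (S14.mk1 p (Polynomial.monomial n (Polynomial.C c)))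
      = S14.mk2 p ((algebraMap ℤ_[p] (DRing p) : ℤ_[p] →+* DRing p) c * (DRing.FF p) ^ n) := by
    intro n c
    refine congrArg _ ?_
    rw [← Polynomial.C_mul_X_pow_eq_monomial]
    exact hA1 n c
  have hz : ∀ (n m : ℕ) (c : ℤ_[p]),
      S14.mk2 p (S14.mk1 p (Polynomial.monomial n (Polynomial.monomial (m + 1) c))) = 0 := by
    intro n m c
    have e1 : (Polynomial.monomial n (Polynomial.monomial (m + 1) c) : S14.A p)
        = Polynomial.C (Polynomial.C c) * (Polynomial.C Polynomial.X) ^ (m + 1)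
          * Polynomial.X ^ n := by
      rw [← Polynomial.C_mul_X_pow_eq_monomial, ← Polynomial.C_mul_X_pow_eq_monomial,
        map_mul, map_pow]
    have e2 : S14.mk1 p (Polynomial.C (Polynomial.C c) * (Polynomial.C Polynomial.X) ^ (m + 1)
          * Polynomial.X ^ n)
        = (algebraMap ℤ_[p] (DRing p) : ℤ_[p] →+* DRing p) c * (DRing.VV p) ^ (m + 1) * (DRing.FF p) ^ n := by
      rw [map_mul, map_mul, map_pow, map_pow, S14.mk1_CC, S14.mk1_CX, S14.mk1_X]
    rw [e1, e2, map_mul, map_mul, map_pow, S14.mk2_VV, zero_pow (Nat.succ_ne_zero m),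
      mul_zero, zero_mul]
  have hQmk : ∀ q : S14.Q p, ∃ a : S14.A p, S14.mk2 p (S14.mk1 p a) = q := by
    intro q
    obtain ⟨r, rfl⟩ := Ideal.Quotient.mk_surjective (I := S14.J p) q
    obtain ⟨a, rfl⟩ := Ideal.Quotient.mk_surjective (I := DIdeal p) r
    exact ⟨a, rfl⟩
  have hstep : ∀ (n : ℕ) (c : ℤ_[p]),
      ψ (S14.mk2 p (S14.mk1 p (Polynomial.monomial n (Polynomial.C c)))) = c • (FP ^ n) v := by
    intro n c
    rw [hkey n c, hψmk]
    refine (mul_smul ((algebraMap ℤ_[p] (DRing p) : ℤ_[p] →+* DRing p) c) ((DRing.FF p) ^ n) v).trans ?_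
    refine (algebraMap_smul (DRing p) c ((DRing.FF p) ^ n • v)).trans ?_
    exact congrArg (fun y => c • y) (hFpow n v)
  have hstepφ : ∀ (n : ℕ) (c : ℤ_[p]),
      φ (c • (FP ^ n) v) = S14.mk2 p (S14.mk1 p (Polynomial.monomial n (Polynomial.C c))) := by
    intro n c
    rw [map_smul, hφpown n, S14.zsmul_mk2, hkey n c]
  have hsect : ∀ a : S14.A p,
      φ (ψ (S14.mk2 p (S14.mk1 p a))) = S14.mk2 p (S14.mk1 p a) := by
    intro a
    induction a using Polynomial.induction_on' with
    | add q r hq hr => simp only [map_add]; rw [hq, hr]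
    | monomial n q =>
      induction q using Polynomial.induction_on' with
      | add q1 q2 h1 h2 =>
        rw [show (Polynomial.monomial n) (q1 + q2)
            = Polynomial.monomial n q1 + Polynomial.monomial n q2 from map_add _ _ _]
        simp only [map_add]; rw [h1, h2]
      | monomial m c =>
        match m with
        | 0 =>
          rw [show ((Polynomial.monomial 0) c : Polynomial ℤ_[p]) = Polynomial.C c from
            Polynomial.monomial_zero_left (a := c)]
          rw [hstep n c, hstepφ n c]
        | (m + 1) =>
          rw [hz n m c]
          simp
  -- ψ ∘ φ = id via uniqueness
  obtain ⟨φ', _, hφ'u⟩ := huniv P FP VP hFV hVF β ⟨hb1, hb2, hb3⟩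
  have hid : (LinearMap.id : P →ₗ[ℤ_[p]] P) = φ' := by
    refine hφ'u _ ⟨?_, ?_, fun m n => rfl⟩ <;> ext x <;> simp
  have hcomp : ((ψ.restrictScalars ℤ_[p]).comp φ) = φ' := by
    refine hφ'u _ ⟨?_, ?_, ?_⟩
    · ext x
      simp only [LinearMap.comp_apply, LinearMap.coe_restrictScalars]
      rw [hφF' x, map_smul, hFs]
    · ext x
      simp only [LinearMap.comp_apply, LinearMap.coe_restrictScalars]
      rw [hφV' x, map_smul, hVs]
    · intro m n
      simp only [LinearMap.comp_apply, LinearMap.coe_restrictScalars]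
      rw [hφβ]
      obtain ⟨a, rfl⟩ := Ideal.Quotient.mk_surjective (I := Ideal.span {((p:ℕ) : ℤ_[p])}) m
      obtain ⟨b, rfl⟩ := Ideal.Quotient.mk_surjective (I := Ideal.span {((p:ℕ) : ℤ_[p])}) n
      have hγ : S14.γ p (Ideal.Quotient.mk _ a) (Ideal.Quotient.mk _ b)
          = algebraMap ℤ_[p] (S14.Q p) (a * b) := by
        rw [S14.γ_apply, ← map_mul, S14.ρ_mk]
      rw [hγ, show algebraMap ℤ_[p] (S14.Q p) (a * b)
            = S14.mk2 p ((algebraMap ℤ_[p] (DRing p) : ℤ_[p] →+* DRing p) (a * b)) from ((S14.mk2 p).commutes _).symm,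
        hψmk, algebraMap_smul]
      rw [S14.beta_mk_mk p β a b, ← hv]
  have hpsiphi : ∀ x : P, ψ (φ x) = x := by
    intro x
    exact LinearMap.congr_fun (hcomp.trans hid.symm) x
  have hinj : Function.Injective ψ := by
    intro q q' h
    obtain ⟨a, rfl⟩ := hQmk q
    obtain ⟨b, rfl⟩ := hQmk q'
    have h2 := congrArg φ h
    rwa [hsect a, hsect b] at h2
  have hsurj : Function.Surjective ψ := fun x => ⟨φ x, hpsiphi x⟩
  refine ⟨⟨LinearEquiv.ofBijective ψ ⟨hinj, hsurj⟩, ?_⟩, ?_, ?_, ?_⟩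
  · show ψ (Ideal.Quotient.mk (S14.J p) 1) = v
    rw [show Ideal.Quotient.mk (S14.J p) (1 : DRing p) = S14.mk2 p 1 from rfl, hψmk]
    exact one_smul (DRing p) v
  · intro x
    have h1 : ((p : ℕ) : ℤ_[p]) • x = ((p : ℕ) : ℤ_[p]) • (ψ (φ x)) := by rw [hpsiphi]
    rw [h1, ← hψsmulz, S14.p_smul_Q, map_zero]
  · intro x
    have hspan : ∀ a : S14.A p, ∃ c : ℕ →₀ ℤ_[p],
        ψ (S14.mk2 p (S14.mk1 p a)) = c.sum fun l t => t • (FP ^ l) v := by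
      intro a
      induction a using Polynomial.induction_on' with
      | add q r hq hr =>
        obtain ⟨c1, h1⟩ := hq
        obtain ⟨c2, h2⟩ := hr
        refine ⟨c1 + c2, ?_⟩
        rw [map_add, map_add, map_add, h1, h2]
        exact (Finsupp.sum_add_index' (f := c1) (g := c2)
          (h := fun l t => t • (FP ^ l) v)
          (fun l => zero_smul ℤ_[p] _) (fun l b1 b2 => add_smul b1 b2 _)).symm
      | monomial n q =>
        induction q using Polynomial.induction_on' with
        | add q1 q2 h1 h2 =>
          obtain ⟨c1, hc1⟩ := h1
          obtain ⟨c2, hc2⟩ := h2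
          refine ⟨c1 + c2, ?_⟩
          rw [show (Polynomial.monomial n) (q1 + q2)
              = Polynomial.monomial n q1 + Polynomial.monomial n q2 from map_add _ _ _]
          rw [map_add, map_add, map_add, hc1, hc2]
          exact (Finsupp.sum_add_index' (f := c1) (g := c2)
            (h := fun l t => t • (FP ^ l) v)
            (fun l => zero_smul ℤ_[p] _) (fun l b1 b2 => add_smul b1 b2 _)).symm
        | monomial m c =>
          match m with
          | 0 =>
            refine ⟨Finsupp.single n c, ?_⟩
            rw [show ((Polynomial.monomial 0) c : Polynomial ℤ_[p]) = Polynomial.C c from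
              Polynomial.monomial_zero_left (a := c)]
            rw [hstep n c]
            exact (Finsupp.sum_single_index (h := fun l t => t • (FP ^ l) v)
              (zero_smul ℤ_[p] _)).symm
          | (m + 1) =>
            exact ⟨0, by rw [hz n m c, map_zero, Finsupp.sum_zero_index]⟩
    obtain ⟨a, ha⟩ := hQmk (φ x)
    obtain ⟨c, hc⟩ := hspan a
    refine ⟨c, ?_⟩
    rw [← hpsiphi x, ← ha, hc]
  · intro c hc0 l
    have hL : φ (c.sum fun l t => t • (FP ^ l) v)
        = c.sum fun l t => S14.mk2 p (S14.mk1 p (Polynomial.C (Polynomial.C t)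
            * Polynomial.X ^ l)) := by
      rw [map_finsuppSum]
      refine Finsupp.sum_congr fun l _ => ?_
      rw [hstepφ l (c l)]
      exact congrArg _ (congrArg _ (Polynomial.C_mul_X_pow_eq_monomial).symm)
    have hw0 : S14.mk2 p (S14.mk1 p (c.sum fun l t =>
        Polynomial.C (Polynomial.C t) * Polynomial.X ^ l)) = 0 := by
      rw [map_finsuppSum, map_finsuppSum, ← hL, hc0, map_zero]
    have hmem : S14.mk1 p (c.sum fun l t =>
        Polynomial.C (Polynomial.C t) * Polynomial.X ^ l) ∈ S14.J p :=
      Ideal.Quotient.eq_zero_iff_mem.mp hw0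
    have hΘ0 : S14.θ p (c.sum fun l t =>
        Polynomial.C (Polynomial.C t) * Polynomial.X ^ l) = 0 := by
      rw [← S14.Θ_mk1]
      exact RingHom.mem_ker.mp (S14.Θ_J p hmem)
    have hterm : ∀ (k : ℕ) (t : ℤ_[p]),
        S14.θ p (Polynomial.C (Polynomial.C t) * Polynomial.X ^ k)
        = Polynomial.C (PadicInt.toZMod t) * Polynomial.X ^ k := by
      intro k t
      simp [S14.θ, S14.f0]
    have hco : PadicInt.toZMod (c l) = 0 := by
      have h1 : (S14.θ p (c.sum fun k t =>
          Polynomial.C (Polynomial.C t) * Polynomial.X ^ k)).coeff l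
          = c.sum fun k t => (Polynomial.C (PadicInt.toZMod t) * Polynomial.X ^ k).coeff l := by
        rw [map_finsuppSum, Finsupp.sum_congr
          (g2 := fun k t => Polynomial.C (PadicInt.toZMod t) * Polynomial.X ^ k)
          (fun k _ => hterm k (c k))]
        exact map_finsuppSum (Polynomial.lcoeff (ZMod p) l) c
          (fun k t => Polynomial.C (PadicInt.toZMod t) * Polynomial.X ^ k)
      rw [hΘ0] at h1
      have h2 : (c.sum fun k t => (Polynomial.C (PadicInt.toZMod t)
          * Polynomial.X ^ k).coeff l)
          = c.sum fun k t => if l = k then PadicInt.toZMod t else 0 :=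
        Finsupp.sum_congr fun k _ => by rw [Polynomial.coeff_C_mul_X_pow]
      rw [h2, Finsupp.sum_ite_eq c l fun k t => PadicInt.toZMod t] at h1
      by_cases hmemc : l ∈ c.support
      · rw [if_pos hmemc] at h1; exact h1.symm
      · rw [Finsupp.notMem_support_iff.mp hmemc, map_zero]
    have hker : c l ∈ RingHom.ker (PadicInt.toZMod (p := p)) := RingHom.mem_ker.mpr hco
    rw [PadicInt.ker_toZMod, PadicInt.maximalIdeal_eq_span_p] at hker
    exact Ideal.mem_span_singleton.mp hker
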